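/- arXiv:2602.22062 — 2 statements merged into one kernel-verified Lean document; each statement's English description precedes it below -/
import Mathlib

section
/- Let Q_z(y) be a family of probability densities on Y indexed by z, let Q_⋆(y) = E_{z∼H}[Q_z(y)], and let Q̂_N(y) = N^{-1} ∑_{n=1}^N Q_{z_n}(y) with z_1,...,z_N i.i.d. from H. Then the expected chi-squared divergence satisfies E[D_{χ²}(Q̂_N, Q_⋆)] = N^{-1} ∫ Var_{z∼H}(Q_z(y)) / Q_⋆(y) dy. In particular, if there exists an integrable function C(y) with Var_{z∼H}(Q_z(y)) ≤ C(y)·Q_⋆(y) for all y, then E[D_{χ²}(Q̂_N, Q_⋆)] ≤ N^{-1} ∫ C(y) dy → 0 as N → ∞. -/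
open MeasureTheory ENNReal Filter

lemma aux_iid_var {Z : Type*} [MeasurableSpace Z] (Hm : Measure Z) [IsProbabilityMeasure Hm]
    (f : Z → ℝ) (hint : Integrable f Hm) (hint2 : Integrable (fun z => f z ^ 2) Hm)
    (hmean : ∫ z, f z ∂Hm = 0) (N : ℕ) :
    ∫ z : Fin N → Z, (∑ n, f (z n)) ^ 2 ∂(Measure.pi fun _ => Hm)
      = N * ∫ z, f z ^ 2 ∂Hm := by
  letI : MeasureSpace Z := ⟨Hm⟩
  have hvol : (volume : Measure Z) = Hm := rfl
  set g : Fin N → Fin N → Fin N → Z → ℝ :=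
    fun n m i z => (if i = n then f z else 1) * (if i = m then f z else 1) with hg
  have hprod : ∀ n m (z : Fin N → Z), f (z n) * f (z m) = ∏ i, g n m i (z i) := by
    intro n m z
    rw [hg]
    simp only
    rw [Finset.prod_mul_distrib, Finset.prod_ite_eq', Finset.prod_ite_eq']
    simp
  have hgint : ∀ n m i, Integrable (g n m i) Hm := by
    intro n m i
    rcases eq_or_ne i n with rfl | hn <;> rcases eq_or_ne i m with rfl | hm
    · simpa [hg, sq] using hint2
    · simpa [hg, hm] using hint
    · simpa [hg, hn] using hint
    · simpa [hg, hn, hm] using integrable_const (μ := Hm) (1 : ℝ)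
  have hpi : (Measure.pi fun _ : Fin N => Hm) = (volume : Measure (Fin N → Z)) :=
    (MeasureTheory.volume_pi).symm
  have key : ∀ n m : Fin N, ∫ z : Fin N → Z, f (z n) * f (z m) ∂(Measure.pi fun _ => Hm)
      = if n = m then ∫ z, f z ^ 2 ∂Hm else 0 := by
    intro n m
    simp_rw [hprod n m, hpi]
    rw [MeasureTheory.volume_pi, MeasureTheory.integral_fintype_prod_eq_prod (g n m)]
    have hfac : ∀ i, (∫ z, g n m i z) =
        if i = n then (if i = m then ∫ z, f z ^ 2 ∂Hm else 0)
        else (if i = m then 0 else 1) := by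
      intro i
      rcases eq_or_ne i n with rfl | hn <;> rcases eq_or_ne i m with rfl | hm
      · simp [hg, hvol, sq]
      · simp [hg, hm, hvol, hmean]
      · simp [hg, hn, hvol, hmean]
      · simp [hg, hn, hm, hvol]
    simp_rw [hfac]
    rcases eq_or_ne n m with rfl | hnm
    · have h2 : ∀ i : Fin N, (if i = n then (if i = n then ∫ z, f z ^ 2 ∂Hm else 0)
          else (if i = n then 0 else 1)) = if i = n then ∫ z, f z ^ 2 ∂Hm else 1 := by
        intro i; by_cases h : i = n <;> simp [h]
      simp_rw [h2, Finset.prod_ite_eq']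
      simp
    · rw [if_neg hnm]
      exact Finset.prod_eq_zero (Finset.mem_univ n) (by simp [hnm])
  have hintterm : ∀ n m : Fin N,
      Integrable (fun z : Fin N → Z => f (z n) * f (z m)) (Measure.pi fun _ => Hm) := by
    intro n m
    simp_rw [hprod n m, hpi]
    exact Integrable.fintype_prod (fun i => hgint n m i)
  calc ∫ z : Fin N → Z, (∑ n, f (z n)) ^ 2 ∂(Measure.pi fun _ => Hm)
      = ∫ z : Fin N → Z, ∑ n, ∑ m, f (z n) * f (z m) ∂(Measure.pi fun _ => Hm) := by
        simp_rw [sq, Finset.sum_mul_sum]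
    _ = ∑ n, ∑ m, ∫ z : Fin N → Z, f (z n) * f (z m) ∂(Measure.pi fun _ => Hm) := by
        rw [integral_finset_sum _ (fun n _ => integrable_finset_sum _ (fun m _ => hintterm n m))]
        exact Finset.sum_congr rfl fun n _ => integral_finset_sum _ (fun m _ => hintterm n m)
    _ = ∑ n : Fin N, ∫ z, f z ^ 2 ∂Hm := by
        simp_rw [key]
        simp
    _ = N * ∫ z, f z ^ 2 ∂Hm := by simp [Finset.sum_const, mul_comm]

/-- Expected chi-squared divergence of an empirical mixture from its population mixture:
if `Q̂_N(y) = N⁻¹ ∑ₙ Q_{zₙ}(y)` with `z₁,…,z_N` i.i.d. from `H`, and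
`Q⋆(y) = E_{z∼H}[Q_z(y)]`, then
`E[D_χ²(Q̂_N, Q⋆)] = N⁻¹ ∫ Var_{z∼H}(Q_z(y)) / Q⋆(y) dy`; in particular, if
`Var_{z∼H}(Q_z(y)) ≤ C(y) Q⋆(y)` with `C` integrable, then
`E[D_χ²(Q̂_N, Q⋆)] ≤ N⁻¹ ∫ C → 0` as `N → ∞`. -/
theorem expected_chiSq_of_empirical_mixture
    {Z Y : Type*} [MeasurableSpace Z] [MeasurableSpace Y]
    (Hm : Measure Z) [IsProbabilityMeasure Hm] (μ : Measure Y) [SigmaFinite μ]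
    (Q : Z → Y → ℝ) (hQmeas : Measurable (Function.uncurry Q))
    (hQnonneg : ∀ z y, 0 ≤ Q z y)
    (Qs : Y → ℝ) (hQs : ∀ y, Qs y = ∫ z, Q z y ∂Hm) (hQspos : ∀ y, 0 < Qs y)
    (hInt1 : ∀ y, Integrable (fun z => Q z y) Hm)
    (hInt2 : ∀ y, Integrable (fun z => (Q z y - Qs y) ^ 2) Hm)
    (hIntVar : Integrable (fun y => (∫ z, (Q z y - Qs y) ^ 2 ∂Hm) / Qs y) μ)
    (hFubini : ∀ N : ℕ, 0 < N →
      Integrable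
        (fun p : (Fin N → Z) × Y =>
          ((N : ℝ)⁻¹ * ∑ n, Q (p.1 n) p.2 - Qs p.2) ^ 2 / Qs p.2)
        ((Measure.pi fun _ : Fin N => Hm).prod μ)) :
    (∀ N : ℕ, 0 < N →
      ∫ z, (∫ y, ((N : ℝ)⁻¹ * ∑ n, Q (z n) y - Qs y) ^ 2 / Qs y ∂μ)
          ∂(Measure.pi fun _ : Fin N => Hm)
        = (N : ℝ)⁻¹ * ∫ y, (∫ z, (Q z y - Qs y) ^ 2 ∂Hm) / Qs y ∂μ) ∧
    ∀ C : Y → ℝ, Integrable C μ →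
      (∀ y, (∫ z, (Q z y - Qs y) ^ 2 ∂Hm) ≤ C y * Qs y) →
      (∀ N : ℕ, 0 < N →
        ∫ z, (∫ y, ((N : ℝ)⁻¹ * ∑ n, Q (z n) y - Qs y) ^ 2 / Qs y ∂μ)
            ∂(Measure.pi fun _ : Fin N => Hm)
          ≤ (N : ℝ)⁻¹ * ∫ y, C y ∂μ) ∧
      Tendsto
        (fun N : ℕ =>
          ∫ z, (∫ y, ((N : ℝ)⁻¹ * ∑ n, Q (z n) y - Qs y) ^ 2 / Qs y ∂μ)
            ∂(Measure.pi fun _ : Fin N => Hm))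
        atTop (nhds 0) := by
  have hmean : ∀ y, ∫ z, (Q z y - Qs y) ∂Hm = 0 := by
    intro y
    rw [integral_sub (hInt1 y) (integrable_const _), integral_const, probReal_univ]
    simp [hQs y]
  set V : ℝ := ∫ y, (∫ z, (Q z y - Qs y) ^ 2 ∂Hm) / Qs y ∂μ with hV
  have h1 : ∀ N : ℕ, 0 < N →
      ∫ z, (∫ y, ((N : ℝ)⁻¹ * ∑ n, Q (z n) y - Qs y) ^ 2 / Qs y ∂μ)
          ∂(Measure.pi fun _ : Fin N => Hm) = (N : ℝ)⁻¹ * V := by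
    intro N hN
    have hNne : (N : ℝ) ≠ 0 := Nat.cast_ne_zero.mpr hN.ne'
    have hswap :
        ∫ z, (∫ y, ((N : ℝ)⁻¹ * ∑ n, Q (z n) y - Qs y) ^ 2 / Qs y ∂μ)
            ∂(Measure.pi fun _ : Fin N => Hm)
          = ∫ y, (∫ z : Fin N → Z, ((N : ℝ)⁻¹ * ∑ n, Q (z n) y - Qs y) ^ 2 / Qs y
              ∂(Measure.pi fun _ : Fin N => Hm)) ∂μ :=
      integral_integral_swap (hFubini N hN)
    rw [hswap]
    have hinner : ∀ y,
        (∫ z : Fin N → Z, ((N : ℝ)⁻¹ * ∑ n, Q (z n) y - Qs y) ^ 2 / Qs y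
            ∂(Measure.pi fun _ : Fin N => Hm))
          = (N : ℝ)⁻¹ * ((∫ z, (Q z y - Qs y) ^ 2 ∂Hm) / Qs y) := by
      intro y
      have hrw : ∀ z : Fin N → Z,
          ((N : ℝ)⁻¹ * ∑ n, Q (z n) y - Qs y) = (N : ℝ)⁻¹ * ∑ n, (Q (z n) y - Qs y) := by
        intro z
        rw [Finset.sum_sub_distrib, mul_sub, Finset.sum_const, Finset.card_univ,
          Fintype.card_fin, nsmul_eq_mul, ← mul_assoc, inv_mul_cancel₀ hNne, one_mul]
      simp_rw [hrw, mul_pow]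
      rw [integral_div, integral_const_mul,
        aux_iid_var Hm (fun z => Q z y - Qs y) ((hInt1 y).sub (integrable_const _))
          (hInt2 y) (hmean y) N]
      generalize (∫ z, (Q z y - Qs y) ^ 2 ∂Hm) = I
      rw [sq, mul_assoc, ← mul_assoc (N : ℝ)⁻¹ (N : ℝ) I, inv_mul_cancel₀ hNne, one_mul,
        mul_div_assoc]
    simp_rw [hinner]
    rw [integral_const_mul]
  refine ⟨h1, ?_⟩
  intro C hCint hC
  have hle : ∀ y, (∫ z, (Q z y - Qs y) ^ 2 ∂Hm) / Qs y ≤ C y := fun y =>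
    (div_le_iff₀ (hQspos y)).mpr (hC y)
  have hVle : V ≤ ∫ y, C y ∂μ := integral_mono hIntVar hCint hle
  constructor
  · intro N hN
    rw [h1 N hN]
    exact mul_le_mul_of_nonneg_left hVle (by positivity)
  · have hT : Tendsto (fun N : ℕ => (N : ℝ)⁻¹ * V) atTop (nhds 0) := by
      simpa using (tendsto_inv_atTop_nhds_zero_nat (𝕜 := ℝ)).mul_const V
    exact hT.congr'
      (by filter_upwards [eventually_ge_atTop 1] with N hN using (h1 N hN).symm)
end

section
/- Let P(y|h) = (Wh)^y e^{−Wh}/y! with h ∼ Gamma(α, β), W, α, β > 0. Define C(y) = E_h[P(y|h)²] / E_h[P(y|h)]. Then C(y) = (W^y Γ(2y+α)/(y! Γ(y+α))) ((W+β)/(2W+β))^{y+α} (2W+β)^{−y}, and the series ∑_{y=0}^∞ C(y) converges. In particular, C(y) decays geometrically with ratio (4W² + 4Wβ)/(4W² + β² + 4Wβ) < 1 up to subexponential factors. -/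
set_option maxHeartbeats 1000000

open MeasureTheory Real Filter Topology

lemma pg_aux_int (n : ℕ) {a c : ℝ} (ha : 0 < a) (hc : 0 < c) :
    ∫ h in Set.Ioi (0:ℝ), (h:ℝ) ^ n * h ^ (a - 1) * Real.exp (-(c * h))
      = (1/c) ^ ((n:ℝ) + a) * Real.Gamma ((n:ℝ) + a) := by
  rw [← integral_rpow_mul_exp_neg_mul_Ioi (show (0:ℝ) < (n:ℝ) + a by positivity) hc]
  refine setIntegral_congr_fun measurableSet_Ioi fun h hh => ?_
  rw [← Real.rpow_natCast h n, ← Real.rpow_add hh]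
  congr 1
  ring

lemma pg_mom1 (W α β : ℝ) (hW : 0 < W) (hα : 0 < α) (hβ : 0 < β) (y : ℕ) :
    (∫ h in Set.Ioi (0 : ℝ),
        ((W * h) ^ y * Real.exp (-(W * h)) / (Nat.factorial y)) *
          (β ^ α * h ^ (α - 1) * Real.exp (-(β * h)) / Real.Gamma α))
      = (W ^ y * β ^ α / (Nat.factorial y * Real.Gamma α)) *
          ((1/(W+β)) ^ ((y:ℝ) + α) * Real.Gamma ((y:ℝ) + α)) := by
  have h1 : ∫ h in Set.Ioi (0 : ℝ),
      ((W * h) ^ y * Real.exp (-(W * h)) / (Nat.factorial y)) *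
        (β ^ α * h ^ (α - 1) * Real.exp (-(β * h)) / Real.Gamma α)
      = ∫ h in Set.Ioi (0 : ℝ),
        (W ^ y * β ^ α / (Nat.factorial y * Real.Gamma α)) *
          (h ^ y * h ^ (α - 1) * Real.exp (-((W+β) * h))) := by
    refine setIntegral_congr_fun measurableSet_Ioi fun h hh => ?_
    have he : Real.exp (-(W * h)) * Real.exp (-(β * h)) = Real.exp (-((W+β) * h)) := by
      rw [← Real.exp_add]; congr 1; ring
    rw [mul_pow, ← he]
    ring
  rw [h1, MeasureTheory.integral_const_mul, pg_aux_int y hα (by positivity)]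

lemma pg_mom2 (W α β : ℝ) (hW : 0 < W) (hα : 0 < α) (hβ : 0 < β) (y : ℕ) :
    (∫ h in Set.Ioi (0 : ℝ),
        ((W * h) ^ y * Real.exp (-(W * h)) / (Nat.factorial y)) ^ 2 *
          (β ^ α * h ^ (α - 1) * Real.exp (-(β * h)) / Real.Gamma α))
      = (W ^ (2*y) * β ^ α / ((Nat.factorial y)^2 * Real.Gamma α)) *
          ((1/(2*W+β)) ^ (2*(y:ℝ) + α) * Real.Gamma (2*(y:ℝ) + α)) := by
  have h1 : ∫ h in Set.Ioi (0 : ℝ),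
      ((W * h) ^ y * Real.exp (-(W * h)) / (Nat.factorial y)) ^ 2 *
        (β ^ α * h ^ (α - 1) * Real.exp (-(β * h)) / Real.Gamma α)
      = ∫ h in Set.Ioi (0 : ℝ),
        (W ^ (2*y) * β ^ α / ((Nat.factorial y)^2 * Real.Gamma α)) *
          (h ^ (2*y) * h ^ (α - 1) * Real.exp (-((2*W+β) * h))) := by
    refine setIntegral_congr_fun measurableSet_Ioi fun h hh => ?_
    have he : Real.exp (-(W * h)) ^ 2 * Real.exp (-(β * h)) = Real.exp (-((2*W+β) * h)) := by
      rw [← Real.exp_nat_mul, ← Real.exp_add]; congr 1; push_cast; ring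
    rw [← he]
    ring
  rw [h1, MeasureTheory.integral_const_mul, pg_aux_int (2*y) hα (by positivity)]
  push_cast
  ring_nf

lemma pg_ratio_eq (W α β : ℝ) (hW : 0 < W) (hα : 0 < α) (hβ : 0 < β) (y : ℕ) :
    ((W ^ (2*y) * β ^ α / ((Nat.factorial y)^2 * Real.Gamma α)) *
          ((1/(2*W+β)) ^ (2*(y:ℝ) + α) * Real.Gamma (2*(y:ℝ) + α))) /
      ((W ^ y * β ^ α / (Nat.factorial y * Real.Gamma α)) *
          ((1/(W+β)) ^ ((y:ℝ) + α) * Real.Gamma ((y:ℝ) + α)))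
      = (W ^ y * Real.Gamma (2 * (y : ℝ) + α) /
            ((Nat.factorial y) * Real.Gamma ((y : ℝ) + α))) *
          ((W + β) / (2 * W + β)) ^ ((y : ℝ) + α) *
          (2 * W + β) ^ (-(y : ℝ)) := by
  have hWβ : (0:ℝ) < W + β := by linarith
  have h2Wβ : (0:ℝ) < 2*W + β := by linarith
  have hG2 : (0:ℝ) < Real.Gamma (2*(y:ℝ) + α) := Real.Gamma_pos_of_pos (by positivity)
  have hG1 : (0:ℝ) < Real.Gamma ((y:ℝ) + α) := Real.Gamma_pos_of_pos (by positivity)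
  have hGα : (0:ℝ) < Real.Gamma α := Real.Gamma_pos_of_pos hα
  have hf : (0:ℝ) < (Nat.factorial y : ℝ) := by positivity
  have e1 : ((1:ℝ)/(2*W+β)) ^ (2*(y:ℝ) + α)
      = ((2*W+β) ^ ((y:ℝ)) * (2*W+β) ^ ((y:ℝ) + α))⁻¹ := by
    rw [← Real.rpow_add h2Wβ, one_div, Real.inv_rpow h2Wβ.le]
    congr 2
    ring
  have e2 : ((1:ℝ)/(W+β)) ^ ((y:ℝ) + α) = ((W+β) ^ ((y:ℝ) + α))⁻¹ := by
    rw [one_div, Real.inv_rpow hWβ.le]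
  have e3 : ((W + β) / (2 * W + β)) ^ ((y : ℝ) + α)
      = (W+β) ^ ((y:ℝ) + α) / (2*W+β) ^ ((y:ℝ) + α) :=
    Real.div_rpow hWβ.le h2Wβ.le _
  have e4 : (2 * W + β) ^ (-(y : ℝ)) = ((2*W+β) ^ ((y:ℝ)))⁻¹ := by
    rw [Real.rpow_neg h2Wβ.le]
  have p1 : (0:ℝ) < (2*W+β) ^ ((y:ℝ)) := Real.rpow_pos_of_pos h2Wβ _
  have p2 : (0:ℝ) < (2*W+β) ^ ((y:ℝ)+α) := Real.rpow_pos_of_pos h2Wβ _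
  have p3 : (0:ℝ) < (W+β) ^ ((y:ℝ)+α) := Real.rpow_pos_of_pos hWβ _
  rw [e1, e2, e3, e4, pow_mul]
  field_simp
  ring

lemma pg_summable (W α β : ℝ) (hW : 0 < W) (hα : 0 < α) (hβ : 0 < β) :
    Summable (fun y : ℕ =>
      (W ^ y * Real.Gamma (2 * (y : ℝ) + α) /
            ((Nat.factorial y) * Real.Gamma ((y : ℝ) + α))) *
          ((W + β) / (2 * W + β)) ^ ((y : ℝ) + α) *
          (2 * W + β) ^ (-(y : ℝ))) := by
  have hWβ : (0:ℝ) < W + β := by linarith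
  have h2Wβ : (0:ℝ) < 2*W + β := by linarith
  set f : ℕ → ℝ := fun y =>
      (W ^ y * Real.Gamma (2 * (y : ℝ) + α) /
            ((Nat.factorial y) * Real.Gamma ((y : ℝ) + α))) *
          ((W + β) / (2 * W + β)) ^ ((y : ℝ) + α) *
          (2 * W + β) ^ (-(y : ℝ)) with hf
  have hfpos : ∀ y, 0 < f y := by
    intro y
    have hG2 : (0:ℝ) < Real.Gamma (2*(y:ℝ) + α) := Real.Gamma_pos_of_pos (by positivity)
    have hG1 : (0:ℝ) < Real.Gamma ((y:ℝ) + α) := Real.Gamma_pos_of_pos (by positivity)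
    have : (0:ℝ) < (W+β)/(2*W+β) := by positivity
    rw [hf]
    positivity
  set R : ℕ → ℝ := fun y =>
      (W * ((W+β)/(2*W+β)) / (2*W+β)) *
        ((2*(y:ℝ)+α) * (2*(y:ℝ)+1+α) / (((y:ℝ)+1) * ((y:ℝ)+α))) with hR
  have hrec : ∀ y : ℕ, f (y+1) = R y * f y := by
    intro y
    have hG1 : (0:ℝ) < Real.Gamma ((y:ℝ) + α) := Real.Gamma_pos_of_pos (by positivity)
    have hG2 : (0:ℝ) < Real.Gamma (2*(y:ℝ) + α) := Real.Gamma_pos_of_pos (by positivity)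
    have e1 : Real.Gamma (2 * ((y:ℝ)+1) + α)
        = (2*(y:ℝ)+1+α) * ((2*(y:ℝ)+α) * Real.Gamma (2*(y:ℝ)+α)) := by
      have h1 : (2 * ((y:ℝ)+1) + α) = (2*(y:ℝ)+1+α) + 1 := by ring
      have h2 : (2*(y:ℝ)+1+α) = (2*(y:ℝ)+α) + 1 := by ring
      rw [h1, Real.Gamma_add_one (by positivity), h2, Real.Gamma_add_one (by positivity)]
    have e2 : Real.Gamma (((y:ℝ)+1) + α) = ((y:ℝ)+α) * Real.Gamma ((y:ℝ)+α) := by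
      have h1 : (((y:ℝ)+1) + α) = ((y:ℝ)+α) + 1 := by ring
      rw [h1, Real.Gamma_add_one (by positivity)]
    have e3 : ((W + β) / (2 * W + β)) ^ (((y:ℝ)+1) + α)
        = ((W+β)/(2*W+β)) * ((W + β) / (2 * W + β)) ^ ((y:ℝ) + α) := by
      rw [show (((y:ℝ)+1) + α) = 1 + ((y:ℝ)+α) by ring,
        Real.rpow_add (by positivity), Real.rpow_one]
    have e4 : (2 * W + β) ^ (-((y:ℝ)+1)) = (2*W+β)⁻¹ * (2 * W + β) ^ (-(y:ℝ)) := by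
      rw [show (-((y:ℝ)+1)) = (-1) + (-(y:ℝ)) by ring, Real.rpow_add h2Wβ,
        Real.rpow_neg_one]
    simp only [hf, hR]
    push_cast
    rw [e1, e2, e3, e4, Nat.factorial_succ]
    have hfy : (0:ℝ) < (Nat.factorial y : ℝ) := by positivity
    push_cast
    field_simp
    ring
  have hL : (4 * W ^ 2 + 4 * W * β) / (4 * W ^ 2 + β ^ 2 + 4 * W * β) < 1 := by
    rw [div_lt_one (by positivity)]
    nlinarith [sq_nonneg β]
  have hinv : Tendsto (fun y:ℕ => ((y:ℝ))⁻¹) atTop (𝓝 0) :=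
    tendsto_inv_atTop_zero.comp tendsto_natCast_atTop_atTop
  have hRtendsto : Tendsto R atTop
      (𝓝 ((4 * W ^ 2 + 4 * W * β) / (4 * W ^ 2 + β ^ 2 + 4 * W * β))) := by
    have key : Tendsto (fun y:ℕ =>
        (W * ((W+β)/(2*W+β)) / (2*W+β)) *
          ((2+α*((y:ℝ))⁻¹) * (2+(1+α)*((y:ℝ))⁻¹) / ((1+((y:ℝ))⁻¹) * (1+α*((y:ℝ))⁻¹))))
        atTop (𝓝 ((W * ((W+β)/(2*W+β)) / (2*W+β)) * ((2+α*0) * (2+(1+α)*0) / ((1+0) * (1+α*0))))) := by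
      apply Tendsto.const_mul
      apply Tendsto.div
      · exact (tendsto_const_nhds.add (hinv.const_mul α)).mul
          (tendsto_const_nhds.add (hinv.const_mul (1+α)))
      · exact (tendsto_const_nhds.add hinv).mul
          (tendsto_const_nhds.add (hinv.const_mul α))
      · norm_num
    have hlim : (W * ((W+β)/(2*W+β)) / (2*W+β)) * ((2+α*0) * (2+(1+α)*0) / ((1+0) * (1+α*0)))
        = (4 * W ^ 2 + 4 * W * β) / (4 * W ^ 2 + β ^ 2 + 4 * W * β) := by
      have : (2*W+β)*(2*W+β) = 4 * W ^ 2 + β ^ 2 + 4 * W * β := by ring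
      field_simp
      ring
    rw [hlim] at key
    apply key.congr'
    filter_upwards [eventually_gt_atTop 0] with y hy
    have hy' : (0:ℝ) < (y:ℝ) := by exact_mod_cast hy
    simp only [hR]
    congr 1
    rw [div_eq_div_iff (by positivity) (by positivity)]
    field_simp
    ring_nf
  refine summable_of_ratio_test_tendsto_lt_one hL
    (Eventually.of_forall fun y => (hfpos y).ne') ?_
  have : ∀ y : ℕ, ‖f (y+1)‖ / ‖f y‖ = R y := by
    intro y
    rw [Real.norm_of_nonneg (hfpos (y+1)).le, Real.norm_of_nonneg (hfpos y).le, hrec y,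
      mul_div_assoc, div_self (hfpos y).ne', mul_one]
  simpa only [this] using hRtendsto

/-- For the Poisson–Gamma model `P(y|h) = (Wh)^y e^{−Wh}/y!`, `h ∼ Gamma(α,β)`, the
ratio of second to first moment `C(y) = E_h[P(y|h)²] / E_h[P(y|h)]` equals
`(W^y Γ(2y+α)/(y! Γ(y+α))) ((W+β)/(2W+β))^{y+α} (2W+β)^{−y}`, the series `∑ C(y)`
converges, and the geometric ratio `(4W² + 4Wβ)/(4W² + β² + 4Wβ)` is `< 1`. -/
theorem poisson_gamma_moment_ratio_summable (W α β : ℝ)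
    (hW : 0 < W) (hα : 0 < α) (hβ : 0 < β) :
    (∀ y : ℕ,
      (∫ h in Set.Ioi (0 : ℝ),
          ((W * h) ^ y * Real.exp (-(W * h)) / (Nat.factorial y)) ^ 2 *
            (β ^ α * h ^ (α - 1) * Real.exp (-(β * h)) / Real.Gamma α)) /
        (∫ h in Set.Ioi (0 : ℝ),
          ((W * h) ^ y * Real.exp (-(W * h)) / (Nat.factorial y)) *
            (β ^ α * h ^ (α - 1) * Real.exp (-(β * h)) / Real.Gamma α))
      = (W ^ y * Real.Gamma (2 * (y : ℝ) + α) /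
            ((Nat.factorial y) * Real.Gamma ((y : ℝ) + α))) *
          ((W + β) / (2 * W + β)) ^ ((y : ℝ) + α) *
          (2 * W + β) ^ (-(y : ℝ))) ∧
    Summable (fun y : ℕ =>
      (∫ h in Set.Ioi (0 : ℝ),
          ((W * h) ^ y * Real.exp (-(W * h)) / (Nat.factorial y)) ^ 2 *
            (β ^ α * h ^ (α - 1) * Real.exp (-(β * h)) / Real.Gamma α)) /
        (∫ h in Set.Ioi (0 : ℝ),
          ((W * h) ^ y * Real.exp (-(W * h)) / (Nat.factorial y)) *
            (β ^ α * h ^ (α - 1) * Real.exp (-(β * h)) / Real.Gamma α))) ∧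
    (4 * W ^ 2 + 4 * W * β) / (4 * W ^ 2 + β ^ 2 + 4 * W * β) < 1 := by
  have heq : ∀ y : ℕ,
      (∫ h in Set.Ioi (0 : ℝ),
          ((W * h) ^ y * Real.exp (-(W * h)) / (Nat.factorial y)) ^ 2 *
            (β ^ α * h ^ (α - 1) * Real.exp (-(β * h)) / Real.Gamma α)) /
        (∫ h in Set.Ioi (0 : ℝ),
          ((W * h) ^ y * Real.exp (-(W * h)) / (Nat.factorial y)) *
            (β ^ α * h ^ (α - 1) * Real.exp (-(β * h)) / Real.Gamma α))
      = (W ^ y * Real.Gamma (2 * (y : ℝ) + α) /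
            ((Nat.factorial y) * Real.Gamma ((y : ℝ) + α))) *
          ((W + β) / (2 * W + β)) ^ ((y : ℝ) + α) *
          (2 * W + β) ^ (-(y : ℝ)) := by
    intro y
    rw [pg_mom2 W α β hW hα hβ y, pg_mom1 W α β hW hα hβ y,
      pg_ratio_eq W α β hW hα hβ y]
  refine ⟨heq, ?_, ?_⟩
  · exact (pg_summable W α β hW hα hβ).congr fun y => (heq y).symm
  · rw [div_lt_one (by positivity)]
    nlinarith [sq_nonneg β]
end
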